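/- Let X, Y : ℝ → (2×2 real matrices) be differentiable at a point t, with Y_s symmetric for all s and X_s invertible for all s in a neighbourhood of t. For τ near 0 define Y_τ(t) = Y_{t+τ} − (X_{t+τ}·X_t⁻¹)·Y_t·(X_{t+τ}·X_t⁻¹)ᵀ. Then the limit as τ → 0 of det(Y_τ(t))/τ² exists and equals (det X_t)² · det( (d/ds)|_{s=t}(X_s⁻¹·Y_s·X_s⁻ᵀ) ). -/

import Mathlib

open Matrix

/-- The limit `lim_{τ→0} det(Y_τ(t))/τ²` exists and equals
`(det X_t)² · det( (d/dt)(X_t⁻¹ Y_t X_t⁻ᵀ) )`, where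
`Y_τ(t) = Y_{t+τ} - (X_{t+τ}X_t⁻¹) Y_t (X_{t+τ}X_t⁻¹)ᵀ` is the noise part of the
intermediate map of a one-mode Gaussian process. -/
theorem delta_limit
    (X Y : ℝ → Matrix (Fin 2) (Fin 2) ℝ)
    (X' Y' M' : Matrix (Fin 2) (Fin 2) ℝ) (t : ℝ)
    (hYs : ∀ s, (Y s).IsSymm)
    (hXinv : ∀ᶠ s in nhds t, IsUnit (X s).det)
    (hX : ∀ i j, HasDerivAt (fun s => X s i j) (X' i j) t)
    (hY : ∀ i j, HasDerivAt (fun s => Y s i j) (Y' i j) t)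
    (hM : ∀ i j, HasDerivAt (fun s => ((X s)⁻¹ * Y s * ((X s)⁻¹)ᵀ) i j) (M' i j) t) :
    Filter.Tendsto
      (fun τ => (Y (t+τ) - (X (t+τ) * (X t)⁻¹) * Y t * (X (t+τ) * (X t)⁻¹)ᵀ).det / τ ^ 2)
      (nhdsWithin 0 {0}ᶜ)
      (nhds (((X t).det) ^ 2 * M'.det)) := by
  set M : ℝ → Matrix (Fin 2) (Fin 2) ℝ := fun s => (X s)⁻¹ * Y s * ((X s)⁻¹)ᵀ with hMdef
  -- shift map τ ↦ t + τ
  have hshift0 : Filter.Tendsto (fun τ : ℝ => t + τ) (nhdsWithin 0 {0}ᶜ) (nhds t) := by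
    have : Filter.Tendsto (fun τ : ℝ => t + τ) (nhds 0) (nhds (t + 0)) :=
      (continuous_const.add continuous_id).tendsto 0
    simpa using this.mono_left nhdsWithin_le_nhds
  have hshift : Filter.Tendsto (fun τ : ℝ => t + τ) (nhdsWithin 0 {0}ᶜ)
      (nhdsWithin t {t}ᶜ) := by
    refine tendsto_nhdsWithin_of_tendsto_nhds_of_eventually_within _ hshift0 ?_
    filter_upwards [self_mem_nhdsWithin] with τ hτ
    simp only [Set.mem_compl_iff, Set.mem_singleton_iff] at hτ ⊢
    intro h
    exact hτ (by linarith)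
  -- entrywise difference quotient convergence for M
  have hMtend : Filter.Tendsto (fun τ : ℝ => τ⁻¹ • (M (t + τ) - M t))
      (nhdsWithin 0 {0}ᶜ) (nhds M') := by
    refine tendsto_pi_nhds.mpr ?_
    intro i
    rw [tendsto_pi_nhds]
    intro j
    have h1 := (hasDerivAt_iff_tendsto_slope.mp (hM i j)).comp hshift
    exact h1.congr fun τ => by
      simp [Function.comp, slope_def_field, div_eq_inv_mul, smul_eq_mul,
        Matrix.smul_apply, Matrix.sub_apply, add_sub_cancel_left, hMdef]
  -- continuity of det ∘ X at t
  have hXcont : ContinuousAt X t := by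
    apply continuousAt_pi.2
    intro i
    apply continuousAt_pi.2
    intro j
    exact (hX i j).continuousAt
  have hXdet : Filter.Tendsto (fun τ : ℝ => (X (t + τ)).det)
      (nhdsWithin 0 {0}ᶜ) (nhds (X t).det) :=
    ((continuous_id.matrix_det.continuousAt).comp hXcont).tendsto.comp hshift0
  -- the combined limit
  have hmain : Filter.Tendsto
      (fun τ : ℝ => (X (t + τ)).det ^ 2 * (τ⁻¹ • (M (t + τ) - M t)).det)
      (nhdsWithin 0 {0}ᶜ) (nhds ((X t).det ^ 2 * M'.det)) :=
    (hXdet.pow 2).mul ((continuous_id.matrix_det.continuousAt.tendsto).comp hMtend)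
  -- eventual equality of the two functions
  refine hmain.congr' ?_
  have hXt : IsUnit (X t).det := hXinv.self_of_nhds
  have hXinv' : ∀ᶠ τ in nhdsWithin 0 {0}ᶜ, IsUnit (X (t + τ)).det := hshift0.eventually hXinv
  filter_upwards [hXinv', self_mem_nhdsWithin] with τ hu hτ
  have hτ0 : τ ≠ 0 := by simpa using hτ
  -- algebraic identity
  have h1 : X (t + τ) * (X (t + τ))⁻¹ = 1 := Matrix.mul_nonsing_inv _ hu
  have htr : ((X (t + τ))⁻¹)ᵀ * (X (t + τ))ᵀ = 1 := by
    rw [← Matrix.transpose_mul, h1, Matrix.transpose_one]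
  have hYeq : X (t + τ) * M (t + τ) * (X (t + τ))ᵀ = Y (t + τ) := by
    simp only [hMdef]
    calc X (t + τ) * ((X (t + τ))⁻¹ * Y (t + τ) * ((X (t + τ))⁻¹)ᵀ) * (X (t + τ))ᵀ
        = (X (t + τ) * (X (t + τ))⁻¹) * Y (t + τ) * (((X (t + τ))⁻¹)ᵀ * (X (t + τ))ᵀ) := by
          noncomm_ring
      _ = Y (t + τ) := by rw [h1, htr]; simp
  have hkey : Y (t + τ) - (X (t + τ) * (X t)⁻¹) * Y t * (X (t + τ) * (X t)⁻¹)ᵀ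
      = X (t + τ) * (M (t + τ) - M t) * (X (t + τ))ᵀ := by
    have h2 : (X (t + τ) * (X t)⁻¹) * Y t * (X (t + τ) * (X t)⁻¹)ᵀ
        = X (t + τ) * M t * (X (t + τ))ᵀ := by
      simp only [hMdef, Matrix.transpose_mul]
      noncomm_ring
    rw [h2, ← hYeq]
    noncomm_ring
  rw [hkey]
  rw [Matrix.det_smul]
  simp only [Matrix.det_mul, Matrix.det_transpose, Fintype.card_fin]
  field_simp
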